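/- Let G be a finite nilpotent group that is unramified over a nontrivial abelian normal subgroup N (so that G/N is abelian, since G′ ⊊ N). Then G is unramified over every abelian normal subgroup M of G containing N. -/

import Mathlib

open scoped BigOperators

noncomputable def charInner (G : Type) [Group G] (φ ψ : G → ℂ) : ℂ :=
  (Nat.card G : ℂ)⁻¹ * ∑ᶠ g, φ g * (starRingEnd ℂ) (ψ g)

/-- `χ` is the character of some irreducible complex representation of `G`. -/
def IsIrrChar (G : Type) [Group G] (χ : G → ℂ) : Prop :=
  ∃ ρ : FDRep ℂ G, CategoryTheory.Simple ρ ∧ FDRep.character ρ = χ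

/-- A class function is multiplicity free if it pairs with each irreducible
character with multiplicity at most one. -/
def MultFree (G : Type) [Group G] (φ : G → ℂ) : Prop :=
  ∀ μ : G → ℂ, IsIrrChar G μ → charInner G φ μ = 0 ∨ charInner G φ μ = 1

/-- `G` is unramified over `N`: every irreducible character of `G` restricts to `N`
multiplicity-freely or as a multiple of the trivial character. -/
def UnramifiedOver (G : Type) [Group G] (N : Subgroup G) : Prop :=
  ∀ χ : G → ℂ, IsIrrChar G χ →
    MultFree N (fun n : N => χ n) ∨ ∀ n : N, χ n = χ 1

def PseudoUnramifiedOver (G : Type) [Group G] (N : Subgroup G) : Prop :=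
  ∀ μ : ↥N → ℂ, IsIrrChar ↥N μ →
    ∃ χ : G → ℂ, IsIrrChar G χ ∧ charInner ↥N (fun n : N => χ n) μ ≠ 0 ∧
      MultFree ↥N (fun n : N => χ n)

/-- The conjugate character `ᵍμ(n) = μ(g⁻¹ n g)`. -/
def conjChar {G : Type} [Group G] (N : Subgroup G) [hN : N.Normal] (g : G)
    (μ : ↥N → ℂ) : ↥N → ℂ :=
  fun n => μ ⟨g⁻¹ * ↑n * g, hN.conj_mem' ↑n n.2 g⟩

lemma conjChar_mul {G : Type} [Group G] (N : Subgroup G) [N.Normal] (a b : G)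
    (μ : ↥N → ℂ) : conjChar N (a * b) μ = conjChar N a (conjChar N b μ) := by
  funext n
  simp [conjChar, mul_assoc]

lemma conjChar_one {G : Type} [Group G] (N : Subgroup G) [N.Normal]
    (μ : ↥N → ℂ) : conjChar N 1 μ = μ := by
  funext n
  simp [conjChar]

/-- The inertia subgroup of μ. -/
def inertia {G : Type} [Group G] (N : Subgroup G) [N.Normal] (μ : ↥N → ℂ) :
    Subgroup G where
  carrier := {g | conjChar N g μ = μ}
  one_mem' := conjChar_one N μ
  mul_mem' := by
    intro a b ha hb
    simp only [Set.mem_setOf_eq] at *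
    rw [conjChar_mul, hb, ha]
  inv_mem' := by
    intro a ha
    simp only [Set.mem_setOf_eq] at *
    conv_lhs => rw [← ha]
    rw [← conjChar_mul, inv_mul_cancel, conjChar_one]

/-! ### Auxiliary development -/

open CategoryTheory Module

namespace StmtAux

noncomputable section

variable {H : Type} [Group H]

/-- invariance of a submodule under a representation -/
def SubRep {V : Type} [AddCommGroup V] [Module ℂ V] (ρ : Representation ℂ H V)
    (p : Submodule ℂ V) : Prop := ∀ (g : H), ∀ v ∈ p, ρ g v ∈ p

def subRepn {V : Type} [AddCommGroup V] [Module ℂ V] (ρ : Representation ℂ H V)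
    (p : Submodule ℂ V) (hp : SubRep ρ p) : Representation ℂ H ↥p where
  toFun g := (ρ g).restrict (fun v hv => hp g v hv)
  map_one' := by ext v; simp
  map_mul' g g' := by ext v; simp [LinearMap.restrict_apply]

lemma subRepn_apply {V : Type} [AddCommGroup V] [Module ℂ V] (ρ : Representation ℂ H V)
    (p : Submodule ℂ V) (hp : SubRep ρ p) (g : H) (v : ↥p) :
    (subRepn ρ p hp g v : V) = ρ g (v : V) := rfl

/-- the sub-FDRep on an invariant submodule -/
def subFD (X : FDRep ℂ H) (p : Submodule ℂ X) (hp : SubRep X.ρ p) : FDRep ℂ H :=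
  FDRep.of (subRepn X.ρ p hp)

lemma subFD_ρ (X : FDRep ℂ H) (p : Submodule ℂ X) (hp : SubRep X.ρ p) :
    (subFD X p hp).ρ = subRepn X.ρ p hp := rfl

/-- morphisms of `FDRep` from equivariant linear maps -/
def mkHom {X Y : FDRep ℂ H} (f : X.V →ₗ[ℂ] Y.V)
    (hf : ∀ (g : H) v, f (X.ρ g v) = Y.ρ g (f v)) : X ⟶ Y :=
  ⟨ObjectProperty.homMk (ModuleCat.ofHom f), by intro g; ext v; exact hf g v⟩

lemma mkHom_hom {X Y : FDRep ℂ H} (f : X.V →ₗ[ℂ] Y.V) (hf) : (mkHom f hf).hom.hom.hom = f := rfl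

lemma hom_comm {X Y : FDRep ℂ H} (f : X ⟶ Y) (g : H) (v : X) :
    f.hom (X.ρ g v) = Y.ρ g (f.hom v) := by
  have := f.comm g
  exact congrFun (congrArg (fun (l : X.V ⟶ Y.V) => (l : X → Y)) this) v

/-- the inclusion morphism of a subrepresentation -/
def subInc (X : FDRep ℂ H) (p : Submodule ℂ X) (hp : SubRep X.ρ p) : subFD X p hp ⟶ X :=
  mkHom (p.subtype) (by intro g v; rfl)

lemma subInc_hom_apply (X : FDRep ℂ H) (p : Submodule ℂ X) (hp : SubRep X.ρ p) (v : ↥p) :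
    (subInc X p hp).hom v = (v : X) := rfl

lemma comp_hom_apply {X Y Z : FDRep ℂ H} (f : X ⟶ Y) (g : Y ⟶ Z) (v : X) :
    (f ≫ g).hom v = g.hom (f.hom v) := rfl

lemma zero_hom_apply {X Y : FDRep ℂ H} (v : X) : ((0 : X ⟶ Y).hom) v = 0 := rfl

lemma homExt {X Y : FDRep ℂ H} (f g : X ⟶ Y) (h : ∀ v, f.hom v = g.hom v) : f = g := by
  apply Action.Hom.ext; ext v; exact h v

lemma id_hom_apply {X : FDRep ℂ H} (v : X) : (𝟙 X : X ⟶ X).hom v = v := rfl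

/-- an isomorphism from a bijective equivariant map -/
lemma isIso_of_bijective {X Y : FDRep ℂ H} (f : X ⟶ Y)
    (hb : Function.Bijective ((ConcreteCategory.hom f.hom : X.V →ₗ[ℂ] Y.V) : X → Y)) : IsIso f := by
  set F : X.V →ₗ[ℂ] Y.V := ConcreteCategory.hom f.hom with hF
  let e := LinearEquiv.ofBijective F hb
  set S : Y.V →ₗ[ℂ] X.V := e.symm.toLinearMap with hS
  have he : ∀ v, F (S v) = v := fun v => e.apply_symm_apply v
  refine ⟨mkHom S ?_, ?_, ?_⟩
  · intro g v
    apply hb.1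
    show F _ = F _
    rw [he]
    have h2 : F (X.ρ g (S v)) = Y.ρ g (F (S v)) := hom_comm f g _
    rw [h2, he]
  · apply homExt; intro v
    rw [comp_hom_apply]
    show S (F v) = v
    exact e.symm_apply_apply v
  · apply homExt; intro v
    rw [comp_hom_apply]
    show F (S v) = v
    exact he v

lemma range_subRep {X Y : FDRep ℂ H} (f : X ⟶ Y) :
    SubRep Y.ρ (LinearMap.range (ConcreteCategory.hom f.hom : X.V →ₗ[ℂ] Y.V)) := by
  rintro g v ⟨w, rfl⟩
  exact ⟨X.ρ g w, (hom_comm f g w)⟩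

lemma ker_subRep {X Y : FDRep ℂ H} (f : X ⟶ Y) :
    SubRep X.ρ (LinearMap.ker (ConcreteCategory.hom f.hom : X.V →ₗ[ℂ] Y.V)) := by
  intro g v hv
  have hv' : (ConcreteCategory.hom f.hom : X.V →ₗ[ℂ] Y.V) v = 0 := hv
  show (ConcreteCategory.hom f.hom : X.V →ₗ[ℂ] Y.V) _ = 0
  rw [hom_comm f g, hv', map_zero]

theorem simple_of_subRep (X : FDRep ℂ H) (h0 : Nontrivial X)
    (h : ∀ p, SubRep X.ρ p → p = ⊥ ∨ p = ⊤) : Simple X := by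
  constructor
  intro Y f hm
  constructor
  · intro hiso h0f
    obtain ⟨v, w, hvw⟩ := h0
    obtain ⟨ginv, hg1, hg2⟩ := hiso.out
    have hv : ∀ u : X, f.hom (ginv.hom u) = u := by
      intro u
      rw [← comp_hom_apply, hg2, id_hom_apply]
    rw [h0f] at hv
    have hz : ∀ u : X, u = 0 := fun u => by rw [← hv u, zero_hom_apply]
    exact hvw ((hz v).trans (hz w).symm)
  · intro hf
    have hker : ∀ v : Y, (ConcreteCategory.hom f.hom : Y.V →ₗ[ℂ] X.V) v = 0 → v = 0 := by
      intro v hv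
      by_contra hv0
      have hv' : v ∈ LinearMap.ker (ConcreteCategory.hom f.hom : Y.V →ₗ[ℂ] X.V) := hv
      have hcomp : subInc Y _ (ker_subRep f) ≫ f =
          (0 : subFD Y _ (ker_subRep f) ⟶ Y) ≫ f := by
        apply homExt; intro u
        rw [comp_hom_apply, comp_hom_apply, zero_hom_apply, map_zero]
        exact u.2
      have h0' : subInc Y _ (ker_subRep f) = (0 : subFD Y _ (ker_subRep f) ⟶ Y) :=
        hm.right_cancellation _ _ hcomp
      apply hv0
      have := congrArg (fun (l : subFD Y _ (ker_subRep f) ⟶ Y) => l.hom ⟨v, hv'⟩) h0'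
      exact this
    have hinj : Function.Injective ((ConcreteCategory.hom f.hom : Y.V →ₗ[ℂ] X.V) : Y → X) := by
      intro a b hab
      have hs : (ConcreteCategory.hom f.hom : Y.V →ₗ[ℂ] X.V) (a - b) = 0 := by
        rw [map_sub, sub_eq_zero]; exact hab
      exact sub_eq_zero.mp (hker _ hs)
    have hsurj : Function.Surjective ((ConcreteCategory.hom f.hom : Y.V →ₗ[ℂ] X.V) : Y → X) := by
      have hr := h _ (range_subRep f)
      rcases hr with hr | hr
      · exfalso
        apply hf
        apply homExt; intro v
        rw [zero_hom_apply]
        have hmem : (ConcreteCategory.hom f.hom : Y.V →ₗ[ℂ] X.V) v ∈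
            LinearMap.range (ConcreteCategory.hom f.hom : Y.V →ₗ[ℂ] X.V) := ⟨v, rfl⟩
        rw [hr] at hmem
        simpa using hmem
      · intro v
        have : v ∈ LinearMap.range (ConcreteCategory.hom f.hom : Y.V →ₗ[ℂ] X.V) := by rw [hr]; trivial
        exact this
    exact isIso_of_bijective f ⟨hinj, hsurj⟩

theorem nontrivial_of_simple (X : FDRep ℂ H) [hs : Simple X] : Nontrivial X := by
  by_contra hn
  have hss : Subsingleton X := not_nontrivial_iff_subsingleton.mp hn
  apply id_nonzero X
  apply homExt; intro v
  exact hss.elim _ _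

theorem subRep_of_simple (X : FDRep ℂ H) [hs : Simple X] (p : Submodule ℂ X)
    (hp : SubRep X.ρ p) : p = ⊥ ∨ p = ⊤ := by
  by_cases hb : p = ⊥
  · exact Or.inl hb
  · right
    obtain ⟨v, hv, hv0⟩ := Submodule.exists_mem_ne_zero_of_ne_bot hb
    have hmono : Mono (subInc X p hp) := by
      constructor
      intro Z u u' huu
      apply homExt; intro w
      have := congrArg (fun (l : Z ⟶ X) => l.hom w) huu
      simp only [comp_hom_apply, subInc_hom_apply] at this
      exact Subtype.ext this
    have hne : subInc X p hp ≠ 0 := by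
      intro h0
      apply hv0
      have := congrArg (fun (l : subFD X p hp ⟶ X) => l.hom ⟨v, hv⟩) h0
      exact this
    have : IsIso (subInc X p hp) := isIso_of_mono_of_nonzero hne
    rw [Submodule.eq_top_iff']
    intro x
    have hx : x = (subInc X p hp).hom ((inv (subInc X p hp)).hom x) := by
      rw [← comp_hom_apply, IsIso.inv_hom_id, id_hom_apply]
    rw [hx]
    exact ((inv (subInc X p hp)).hom x).2

/-! ### Schur: commuting endomorphisms of a simple rep are scalar -/

theorem exists_scalar_of_comm {X : FDRep ℂ H} [Simple X]
    (f : X.V →ₗ[ℂ] X.V) (hf : ∀ (g : H) v, f (X.ρ g v) = X.ρ g (f v)) :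
    ∃ c : ℂ, ∀ v : X, f v = c • v := by
  have h1 : finrank ℂ (X ⟶ X) = 1 := by
    rw [FDRep.finrank_hom_simple_simple X X, if_pos ⟨Iso.refl X⟩]
  have hid : (𝟙 X : X ⟶ X) ≠ 0 := id_nonzero X
  obtain ⟨c, hc⟩ := (finrank_eq_one_iff_of_nonzero' (𝟙 X : X ⟶ X) hid).mp h1 (mkHom f hf)
  refine ⟨c, fun v => ?_⟩
  have := congrArg (fun (l : X ⟶ X) => l.hom v) hc
  exact this.symm

theorem finrank_eq_one_of_scalar (X : FDRep ℂ H) [Simple X]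
    (hs : ∀ g : H, ∃ c : ℂ, ∀ v : X, X.ρ g v = c • v) : finrank ℂ X = 1 := by
  have h0 : Nontrivial X := nontrivial_of_simple X
  obtain ⟨v, hv⟩ := exists_ne (0 : X)
  have hp : SubRep X.ρ (ℂ ∙ v) := by
    intro g w hw
    obtain ⟨c, hc⟩ := hs g
    rw [hc w]
    exact Submodule.smul_mem _ c hw
  rcases subRep_of_simple X _ hp with h | h
  · exact absurd (h ▸ Submodule.mem_span_singleton_self v) (by simpa using hv)
  · rw [← finrank_top ℂ X, ← h]
    exact finrank_span_singleton hv

theorem finrank_eq_one_of_commuting (X : FDRep ℂ H) [Simple X]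
    (hc : ∀ g g' : H, ∀ v : X, X.ρ g (X.ρ g' v) = X.ρ g' (X.ρ g v)) :
    finrank ℂ X = 1 := by
  apply finrank_eq_one_of_scalar
  intro g
  exact exists_scalar_of_comm (X.ρ g) (fun gp v => (hc gp g v).symm)

/-! ### one-dimensional representations -/

theorem scalar_of_finrank_one {V : Type} [AddCommGroup V] [Module ℂ V]
    [FiniteDimensional ℂ V] (h1 : finrank ℂ V = 1) (f : V →ₗ[ℂ] V) :
    (∀ v, f v = (LinearMap.trace ℂ V f) • v) := by
  have hnt : Nontrivial V := by
    apply Module.nontrivial_of_finrank_pos (R := ℂ); rw [h1]; norm_num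
  obtain ⟨v₀, hv₀⟩ := exists_ne (0 : V)
  have hall := (finrank_eq_one_iff_of_nonzero' v₀ hv₀).mp h1
  obtain ⟨a, ha⟩ := hall (f v₀)
  have hsc : ∀ v, f v = a • v := by
    intro v
    rcases hall v with ⟨c, hc⟩
    rw [← hc, map_smul, ← ha, smul_comm]
  have hfa : f = a • (1 : V →ₗ[ℂ] V) := by
    apply LinearMap.ext; intro v
    rw [hsc v]; rfl
  have htr : LinearMap.trace ℂ V f = a := by
    rw [hfa, map_smul, LinearMap.trace_one, h1]
    simp
  intro v; rw [htr]; exact hsc v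

theorem fdRep_ρ_scalar_of_finrank_one (X : FDRep ℂ H) (h1 : finrank ℂ X = 1) (g : H) :
    ∀ v : X, X.ρ g v = (X.character g) • v :=
  scalar_of_finrank_one h1 (X.ρ g)

theorem char_one_of_finrank_one (X : FDRep ℂ H) (h1 : finrank ℂ X = 1) :
    X.character 1 = 1 := by rw [FDRep.char_one, h1]; norm_num

theorem char_mul_of_finrank_one (X : FDRep ℂ H) (h1 : finrank ℂ X = 1) (g g' : H) :
    X.character (g * g') = X.character g * X.character g' := by
  have hnt : Nontrivial X := by
    apply Module.nontrivial_of_finrank_pos (R := ℂ); rw [h1]; norm_num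
  obtain ⟨v₀, hv₀⟩ := exists_ne (0 : X)
  have h2 : X.ρ (g * g') v₀ = (X.character (g * g')) • v₀ :=
    fdRep_ρ_scalar_of_finrank_one X h1 _ v₀
  have h3 : X.ρ (g * g') v₀ = (X.character g * X.character g') • v₀ := by
    rw [map_mul]
    have : (X.ρ g * X.ρ g') v₀ = X.ρ g (X.ρ g' v₀) := rfl
    rw [this, fdRep_ρ_scalar_of_finrank_one X h1 g' v₀, map_smul,
      fdRep_ρ_scalar_of_finrank_one X h1 g v₀, smul_smul, mul_comm]
  exact smul_left_injective ℂ hv₀ (h2.symm.trans h3)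

theorem char_pow_of_finrank_one (X : FDRep ℂ H) (h1 : finrank ℂ X = 1) (g : H) (n : ℕ) :
    X.character (g ^ n) = X.character g ^ n := by
  induction n with
  | zero => simpa using char_one_of_finrank_one X h1
  | succ n ih => rw [pow_succ, pow_succ, char_mul_of_finrank_one X h1, ih]

theorem real_pow_eq_one {x : ℝ} (hx : 0 ≤ x) {n : ℕ} (hn : n ≠ 0) (h : x ^ n = 1) :
    x = 1 := by
  rcases lt_trichotomy x 1 with hlt | heq | hgt
  · have := pow_lt_one₀ hx hlt hn
    rw [h] at this; norm_num at this
  · exact heq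
  · have := one_lt_pow₀ hgt hn
    rw [h] at this; norm_num at this

theorem char_norm_one [Finite H] (X : FDRep ℂ H) (h1 : finrank ℂ X = 1) (g : H) :
    X.character g * (starRingEnd ℂ) (X.character g) = 1 := by
  have hord : g ^ (orderOf g) = 1 := pow_orderOf_eq_one g
  have hpow : X.character g ^ (orderOf g) = 1 := by
    rw [← char_pow_of_finrank_one X h1, hord, char_one_of_finrank_one X h1]
  have hn0 : orderOf g ≠ 0 := (orderOf_pos g).ne'
  have hnorm : ‖X.character g‖ = 1 := by
    apply real_pow_eq_one (norm_nonneg _) hn0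
    rw [← norm_pow, hpow, norm_one]
  rw [Complex.mul_conj, Complex.normSq_eq_norm_sq, hnorm]
  norm_num

theorem char_conj_eq_inv [Finite H] (X : FDRep ℂ H) (h1 : finrank ℂ X = 1) (g : H) :
    (starRingEnd ℂ) (X.character g) = X.character g⁻¹ := by
  have h2 : X.character g * X.character g⁻¹ = 1 := by
    rw [← char_mul_of_finrank_one X h1, mul_inv_cancel, char_one_of_finrank_one X h1]
  have h3 := char_norm_one X h1 g
  have hne : X.character g ≠ 0 := by
    intro h0; rw [h0, zero_mul] at h2; norm_num at h2
  rw [← h2] at h3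
  exact mul_left_cancel₀ hne h3

/-! ### charInner and invariants -/

theorem card_cast_ne_zero (H : Type) [Group H] [Fintype H] : ((Fintype.card H : ℂ)) ≠ 0 := by
  exact_mod_cast Fintype.card_ne_zero

theorem charInner_eq [Fintype H] (φ ψ : H → ℂ) :
    charInner H φ ψ = (Fintype.card H : ℂ)⁻¹ * ∑ g : H, φ g * (starRingEnd ℂ) (ψ g) := by
  rw [charInner, finsum_eq_sum_of_fintype, Nat.card_eq_fintype_card]

theorem simple_of_finrank_one (X : FDRep ℂ H) (h1 : finrank ℂ X = 1) : Simple X := by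
  apply simple_of_subRep
  · apply Module.nontrivial_of_finrank_pos (R := ℂ); rw [h1]; norm_num
  · intro p _
    have hle : finrank ℂ p ≤ 1 := h1 ▸ Submodule.finrank_le p
    interval_cases hfr : (finrank ℂ p)
    · left
      exact Submodule.finrank_eq_zero.mp hfr
    · right
      exact Submodule.eq_top_of_finrank_eq (by rw [hfr, h1])

theorem charInner_char_eq_finrank_invariants [Finite H] (X σ : FDRep ℂ H)
    (h1 : finrank ℂ σ = 1) :
    charInner H X.character σ.character =
      (finrank ℂ (Representation.invariants (Representation.linHom σ.ρ X.ρ)) : ℂ) := by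
  letI := Fintype.ofFinite H
  haveI : Invertible ((Fintype.card H : ℂ)) := invertibleOfNonzero (card_cast_ne_zero H)
  rw [charInner_eq]
  have hterm : ∀ g : H, X.character g * (starRingEnd ℂ) (σ.character g)
      = (FDRep.of (Representation.linHom σ.ρ X.ρ)).character g := by
    intro g
    rw [char_conj_eq_inv σ h1 g, FDRep.char_linHom]
    ring
  rw [Finset.sum_congr rfl (fun g _ => hterm g)]
  have havg := FDRep.average_char_eq_finrank_invariants
    (FDRep.of (Representation.linHom σ.ρ X.ρ))
  rw [Nat.card_eq_fintype_card] at havg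
  rw [havg]
  rfl

theorem ρ_trivial_of_char_const [Finite H] (X : FDRep ℂ H)
    (hc : ∀ g : H, X.character g = X.character 1) :
    ∀ (g : H) (v : X), X.ρ g v = v := by
  letI := Fintype.ofFinite H
  haveI : Invertible ((Fintype.card H : ℂ)) := invertibleOfNonzero (card_cast_ne_zero H)
  have havg := FDRep.average_char_eq_finrank_invariants X
  rw [Nat.card_eq_fintype_card] at havg
  have hsum : ∑ g : H, X.character g = (Fintype.card H : ℂ) * X.character 1 := by
    rw [Finset.sum_congr rfl (fun g _ => hc g)]
    rw [Finset.sum_const, Finset.card_univ, nsmul_eq_mul]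
  rw [hsum, ← mul_assoc, inv_mul_cancel₀ (card_cast_ne_zero H), one_mul,
    FDRep.char_one] at havg
  have hNat : finrank ℂ (Representation.invariants X.ρ) = finrank ℂ X := by
    exact_mod_cast havg.symm
  have htop : Representation.invariants X.ρ = ⊤ := Submodule.eq_top_of_finrank_eq hNat
  intro g v
  have hv : v ∈ Representation.invariants X.ρ := by rw [htop]; trivial
  exact hv g

/-! ### restriction along group homomorphisms -/

def resFD {H' : Type} [Group H'] (φ : H' →* H) (X : FDRep ℂ H) : FDRep ℂ H' :=
  FDRep.of ((X.ρ : H →* (X.V →ₗ[ℂ] X.V)).comp φ)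

lemma resFD_ρ {H' : Type} [Group H'] (φ : H' →* H) (X : FDRep ℂ H) (g : H') (v : X) :
    (resFD φ X).ρ g v = X.ρ (φ g) v := rfl

lemma resFD_char {H' : Type} [Group H'] (φ : H' →* H) (X : FDRep ℂ H) (g : H') :
    (resFD φ X).character g = X.character (φ g) := rfl

lemma resFD_finrank {H' : Type} [Group H'] (φ : H' →* H) (X : FDRep ℂ H) :
    finrank ℂ (resFD φ X) = finrank ℂ X := rfl

theorem simple_res_of_surjective {H' : Type} [Group H'] (φ : H' →* H)
    (hφ : Function.Surjective φ) (X : FDRep ℂ H) [Simple X] : Simple (resFD φ X) := by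
  apply simple_of_subRep
  · exact nontrivial_of_simple X
  · intro p hp
    apply subRep_of_simple X p
    intro g v hv
    obtain ⟨h', rfl⟩ := hφ g
    exact hp h' v hv

theorem finrank_inv_res_le {H' : Type} [Group H'] (φ : H' →* H) (σ X : FDRep ℂ H) :
    finrank ℂ (Representation.invariants (Representation.linHom σ.ρ X.ρ)) ≤
      finrank ℂ (Representation.invariants
        (Representation.linHom (resFD φ σ).ρ (resFD φ X).ρ)) := by
  haveI : FiniteDimensional ℂ (Representation.invariants
      (Representation.linHom (resFD φ σ).ρ (resFD φ X).ρ)) :=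
    FiniteDimensional.finiteDimensional_submodule _
  apply @Submodule.finrank_mono _ _ _ _ _ _ _ _ this
  intro f hf
  intro n
  rw [Representation.linHom_apply]
  have h2 : (resFD φ σ).ρ n⁻¹ = σ.ρ (φ n)⁻¹ := by
    show σ.ρ (φ n⁻¹) = σ.ρ (φ n)⁻¹
    rw [map_inv]
  have h1 : (resFD φ X).ρ n = X.ρ (φ n) := rfl
  rw [h1, h2]
  have := hf (φ n)
  exact this

/-! ### Maschke and decomposition into minimal subrepresentations -/

section Maschke

variable {V : Type} [AddCommGroup V] [Module ℂ V] [FiniteDimensional ℂ V]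

theorem subRep_exists_compl [Fintype H] (ρ : Representation ℂ H V) (p : Submodule ℂ V)
    (hp : SubRep ρ p) : ∃ q : Submodule ℂ V, SubRep ρ q ∧ IsCompl p q := by
  obtain ⟨q₀, hq₀⟩ := Submodule.exists_isCompl p
  set π : V →ₗ[ℂ] V := p.subtype ∘ₗ (p.linearProjOfIsCompl q₀ hq₀) with hπ
  have hπ_mem : ∀ v, π v ∈ p := fun v => (p.linearProjOfIsCompl q₀ hq₀ v).2
  have hπ_id : ∀ v ∈ p, π v = v := by
    intro v hv
    show p.subtype (p.linearProjOfIsCompl q₀ hq₀ v) = v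
    have h2 : p.linearProjOfIsCompl q₀ hq₀ v = ⟨v, hv⟩ :=
      Submodule.linearProjOfIsCompl_apply_left hq₀ ⟨v, hv⟩
    rw [h2]
    rfl
  set e : V →ₗ[ℂ] V :=
    (Fintype.card H : ℂ)⁻¹ • ∑ g : H, (ρ g) ∘ₗ π ∘ₗ (ρ g⁻¹) with he
  have he_apply : ∀ v, e v = (Fintype.card H : ℂ)⁻¹ •
      ∑ g : H, ρ g (π (ρ g⁻¹ v)) := by
    intro v
    rw [he]
    simp [LinearMap.sum_apply]
  have he_mem : ∀ v, e v ∈ p := by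
    intro v
    rw [he_apply]
    refine Submodule.smul_mem _ _ (Submodule.sum_mem _ fun g _ => ?_)
    exact hp g _ (hπ_mem _)
  have he_id : ∀ v ∈ p, e v = v := by
    intro v hv
    rw [he_apply]
    have hterm : ∀ g : H, ρ g (π (ρ g⁻¹ v)) = v := by
      intro g
      rw [hπ_id _ (hp g⁻¹ v hv)]
      have : ρ g (ρ g⁻¹ v) = (ρ g * ρ g⁻¹) v := rfl
      rw [this, ← map_mul, mul_inv_cancel, map_one, Module.End.one_apply]
    rw [Finset.sum_congr rfl (fun g _ => hterm g), Finset.sum_const, Finset.card_univ,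
      ← Nat.cast_smul_eq_nsmul (R := ℂ), smul_smul, inv_mul_cancel₀ (card_cast_ne_zero H),
      one_smul]
  have he_comm : ∀ (g : H) (v : V), e (ρ g v) = ρ g (e v) := by
    intro g v
    rw [he_apply, he_apply, map_smul]
    congr 1
    rw [map_sum]
    refine (Fintype.sum_equiv (Equiv.mulLeft g)
      (fun x => ρ g ((ρ x) (π ((ρ x⁻¹) v)))) _ ?_).symm
    intro x
    show ρ g (ρ x (π (ρ x⁻¹ v))) = ρ (g * x) (π (ρ (g * x)⁻¹ (ρ g v)))
    have h1 : ρ ((g * x)⁻¹) (ρ g v) = ρ x⁻¹ v := by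
      have ha : ρ ((g * x)⁻¹) (ρ g v) = (ρ ((g * x)⁻¹) * ρ g) v := rfl
      rw [ha, ← map_mul]
      congr 1
      group
    have h2 : ρ (g * x) (π (ρ x⁻¹ v)) = ρ g (ρ x (π (ρ x⁻¹ v))) := by
      rw [map_mul]
      rfl
    rw [h1, h2]
  refine ⟨LinearMap.ker e, ?_, ?_⟩
  · intro g v hv
    have hv' : e v = 0 := hv
    show e (ρ g v) = 0
    rw [he_comm, hv', map_zero]
  · constructor
    · rw [disjoint_iff_inf_le]
      rintro v ⟨hv1, hv2⟩
      have : e v = 0 := hv2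
      have h2 : e v = v := he_id v hv1
      simp only [Submodule.mem_bot]
      rw [← h2, this]
    · rw [codisjoint_iff_le_sup]
      intro v _
      have hsub : v - e v ∈ LinearMap.ker e := by
        show e (v - e v) = 0
        rw [map_sub, he_id _ (he_mem v), sub_self]
      have hv : v = e v + (v - e v) := by abel
      rw [hv]
      exact Submodule.add_mem_sup (he_mem v) hsub

/-- minimal nonzero invariant submodule -/
def MinRep (ρ : Representation ℂ H V) (p : Submodule ℂ V) : Prop :=
  SubRep ρ p ∧ p ≠ ⊥ ∧ ∀ q, SubRep ρ q → q ≤ p → q = ⊥ ∨ q = p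

theorem exists_minRep_le_aux (ρ : Representation ℂ H V) :
    ∀ (n : ℕ) (p : Submodule ℂ V), finrank ℂ p ≤ n → SubRep ρ p → p ≠ ⊥ →
      ∃ m, MinRep ρ m ∧ m ≤ p := by
  intro n
  induction n with
  | zero =>
    intro p hfr hp hpb
    exfalso
    exact hpb (Submodule.finrank_eq_zero.mp (Nat.le_zero.mp hfr))
  | succ n ih =>
    intro p hfr hp hpb
    by_cases hmin : ∀ q, SubRep ρ q → q ≤ p → q = ⊥ ∨ q = p
    · exact ⟨p, ⟨hp, hpb, hmin⟩, le_refl p⟩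
    · push_neg at hmin
      obtain ⟨q, hq, hqle, hqb, hqp⟩ := hmin
      have hlt : q < p := lt_of_le_of_ne hqle hqp
      have hfr2 : finrank ℂ q ≤ n := by
        have := Submodule.finrank_lt_finrank_of_lt hlt
        omega
      obtain ⟨m, hm, hmle⟩ := ih q hfr2 hq hqb
      exact ⟨m, hm, le_trans hmle hqle⟩

theorem exists_minRep_le (ρ : Representation ℂ H V) (p : Submodule ℂ V)
    (hp : SubRep ρ p) (hpb : p ≠ ⊥) : ∃ m, MinRep ρ m ∧ m ≤ p :=
  exists_minRep_le_aux ρ (finrank ℂ p) p (le_refl _) hp hpb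

theorem subRep_sSup (ρ : Representation ℂ H V) (S : Set (Submodule ℂ V))
    (hS : ∀ p ∈ S, SubRep ρ p) : SubRep ρ (sSup S) := by
  intro g v hv
  rw [sSup_eq_iSup] at hv ⊢
  rw [iSup_subtype'] at hv ⊢
  induction hv using Submodule.iSup_induction' with
  | mem i x hx =>
      exact Submodule.mem_iSup_of_mem i (hS i i.2 g x hx)
  | zero => rw [map_zero]; exact Submodule.zero_mem _
  | add x y _ _ hx hy => rw [map_add]; exact Submodule.add_mem _ hx hy

theorem sSup_minRep_eq_top [Fintype H] (ρ : Representation ℂ H V) :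
    sSup {p : Submodule ℂ V | MinRep ρ p} = ⊤ := by
  set s := sSup {p : Submodule ℂ V | MinRep ρ p} with hs
  have hsub : SubRep ρ s := subRep_sSup ρ _ (fun p hp => hp.1)
  by_contra hne
  obtain ⟨q, hq, hcompl⟩ := subRep_exists_compl ρ s hsub
  have hqb : q ≠ ⊥ := by
    intro h0
    apply hne
    have := hcompl.sup_eq_top
    rw [h0, sup_bot_eq] at this
    exact this
  obtain ⟨m, hm, hmq⟩ := exists_minRep_le ρ q hq hqb
  have hms : m ≤ s := le_sSup hm
  have : m ≤ ⊥ := by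
    rw [← hcompl.inf_eq_bot]
    exact le_inf hms hmq
  exact hm.2.1 (le_bot_iff.mp this)

theorem le_top_of_minRep_le [Fintype H] (ρ : Representation ℂ H V) (W : Submodule ℂ V)
    (hmin : ∀ m, MinRep ρ m → m ≤ W) : ∀ v : V, v ∈ W := by
  intro v
  have h1 : sSup {p : Submodule ℂ V | MinRep ρ p} ≤ W := sSup_le (fun p hp => hmin p hp)
  have h2 := sSup_minRep_eq_top ρ
  rw [h2] at h1
  exact h1 trivial

end Maschke

theorem simple_subFD_of_minRep (X : FDRep ℂ H) (p : Submodule ℂ X) (hm : MinRep X.ρ p) :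
    Simple (subFD X p hm.1) := by
  apply simple_of_subRep
  · show Nontrivial ↥p
    rw [Submodule.nontrivial_iff_ne_bot]
    exact hm.2.1
  · intro q hq
    have hq'sub : SubRep X.ρ (Submodule.map p.subtype q) := by
      rintro g v ⟨w, hw, rfl⟩
      exact ⟨subRepn X.ρ p hm.1 g w, hq g w hw, rfl⟩
    have hq'le : Submodule.map p.subtype q ≤ p := by
      rintro v ⟨w, _, rfl⟩
      exact w.2
    have hinj : Function.Injective p.subtype := Subtype.val_injective
    rcases hm.2.2 _ hq'sub hq'le with h | h
    · left
      apply Submodule.map_injective_of_injective hinj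
      rw [h]; exact (Submodule.map_bot _).symm
    · right
      apply Submodule.map_injective_of_injective hinj
      rw [h]; exact (Submodule.range_subtype p).symm.trans (Submodule.map_top _).symm

/-! ### the regular representation separates points -/

def regRep (H : Type) [Group H] [Finite H] : Representation ℂ H (H → ℂ) where
  toFun g := LinearMap.funLeft ℂ ℂ (fun x => g⁻¹ * x)
  map_one' := by
    apply LinearMap.ext; intro f; funext x
    simp [LinearMap.funLeft]
  map_mul' g g' := by
    apply LinearMap.ext; intro f; funext x
    simp [LinearMap.funLeft, mul_assoc]

theorem eq_one_of_forall_simple [Finite H] (h : H)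
    (hall : ∀ X : FDRep ℂ H, Simple X → ∀ v : X, X.ρ h v = v) : h = 1 := by
  letI := Fintype.ofFinite H
  letI : DecidableEq H := Classical.decEq H
  by_contra hne
  set X₀ : FDRep ℂ H := FDRep.of (regRep H) with hX₀
  set D : (H → ℂ) →ₗ[ℂ] (H → ℂ) := regRep H h - LinearMap.id with hD
  have hmin : ∀ m, MinRep (regRep H) m → m ≤ LinearMap.ker D := by
    intro m hm
    have hsimple : Simple (subFD X₀ m hm.1) := simple_subFD_of_minRep X₀ m hm
    intro v hv
    have h1 := hall (subFD X₀ m hm.1) hsimple ⟨v, hv⟩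
    have h2 : (regRep H) h v = v := congrArg Subtype.val h1
    show D v = 0
    rw [hD, LinearMap.sub_apply, h2, LinearMap.id_apply, sub_self]
  have hW_top := le_top_of_minRep_le (regRep H) (LinearMap.ker D) hmin
  have hδ := hW_top (Pi.single (1 : H) (1 : ℂ))
  rw [LinearMap.mem_ker, hD, LinearMap.sub_apply, LinearMap.id_apply, sub_eq_zero] at hδ
  have h3 := congrFun hδ h
  have h4 : (regRep H) h (Pi.single (1 : H) (1 : ℂ)) h
      = (Pi.single (1 : H) (1 : ℂ) : H → ℂ) (h⁻¹ * h) := rfl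
  rw [h4, inv_mul_cancel, Pi.single_eq_same, Pi.single_eq_of_ne hne] at h3
  norm_num at h3

/-! ### summing over fibers of a surjective homomorphism -/

section Transfer

variable {A B : Type} [Group A] [Group B]

def fiber_equiv_ker (φ : A →* B) (b : B) (a₀ : A) (ha₀ : φ a₀ = b) :
    {a // φ a = b} ≃ (MonoidHom.ker φ) where
  toFun x := ⟨a₀⁻¹ * x.1, by
    have : φ x.1 = b := x.2
    simp [MonoidHom.mem_ker, this, ha₀]⟩
  invFun k := ⟨a₀ * k.1, by
    have : φ k.1 = 1 := k.2
    simp [this, ha₀]⟩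
  left_inv x := by
    apply Subtype.ext
    simp [mul_assoc]
  right_inv k := by
    apply Subtype.ext
    simp [mul_assoc]

theorem sum_comp_surjective [Fintype A] [Fintype B] (φ : A →* B)
    (hφ : Function.Surjective φ) (F : B → ℂ) :
    ∑ a : A, F (φ a) = (Nat.card (MonoidHom.ker φ) : ℂ) * ∑ b : B, F b := by
  classical
  have h1 : ∑ a : A, F (φ a)
      = ∑ x : (Σ b : B, {a // φ a = b}), F (φ ((Equiv.sigmaFiberEquiv (⇑φ)) x)) :=
    (Equiv.sum_comp (Equiv.sigmaFiberEquiv (⇑φ)) (fun a => F (φ a))).symm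
  have h2 : ∀ x : (Σ b : B, {a // φ a = b}), F (φ ((Equiv.sigmaFiberEquiv (⇑φ)) x)) = F x.1 := by
    rintro ⟨b, a, ha⟩
    simp [Equiv.sigmaFiberEquiv, ha]
  rw [h1, Finset.sum_congr rfl (fun x _ => h2 x)]
  rw [← Finset.univ_sigma_univ, Finset.sum_sigma]
  have h3 : ∀ b : B, ∑ _a : {a // φ a = b}, F b = (Nat.card (MonoidHom.ker φ) : ℂ) * F b := by
    intro b
    rw [Finset.sum_const, Finset.card_univ, nsmul_eq_mul]
    congr 1
    obtain ⟨a₀, ha₀⟩ := hφ b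
    rw [← Nat.card_eq_fintype_card]
    exact_mod_cast congrArg ((↑·) : ℕ → ℂ) (Nat.card_congr (fiber_equiv_ker φ b a₀ ha₀))
  rw [Finset.sum_congr rfl (fun b _ => h3 b), ← Finset.mul_sum]

theorem card_comp_surjective [Fintype A] [Fintype B] (φ : A →* B)
    (hφ : Function.Surjective φ) :
    (Fintype.card A : ℂ) = (Nat.card (MonoidHom.ker φ) : ℂ) * (Fintype.card B : ℂ) := by
  have := sum_comp_surjective φ hφ (fun _ => (1 : ℂ))
  simpa using this

theorem charInner_comp_surjective [Finite A] [Finite B] (φ : A →* B)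
    (hφ : Function.Surjective φ) (F F' : B → ℂ) :
    charInner A (fun a => F (φ a)) (fun a => F' (φ a)) = charInner B F F' := by
  letI := Fintype.ofFinite A
  letI := Fintype.ofFinite B
  rw [charInner_eq, charInner_eq]
  have hsum := sum_comp_surjective φ hφ (fun b => F b * (starRingEnd ℂ) (F' b))
  have hker : ((Nat.card (MonoidHom.ker φ) : ℂ)) ≠ 0 := by
    have : 0 < Nat.card (MonoidHom.ker φ) := Nat.card_pos
    exact_mod_cast this.ne'
  rw [hsum, card_comp_surjective φ hφ, mul_inv,
    mul_comm ((Nat.card (MonoidHom.ker φ) : ℂ))⁻¹ ((Fintype.card B : ℂ))⁻¹,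
    mul_assoc ((Fintype.card B : ℂ))⁻¹,
    ← mul_assoc ((Nat.card (MonoidHom.ker φ) : ℂ))⁻¹,
    inv_mul_cancel₀ hker, one_mul]

end Transfer

/-! ### unramifiedness passes to quotients -/

theorem unramified_quotient {G : Type} [Group G] [Finite G] (N K : Subgroup G)
    [N.Normal] [K.Normal] (hKN : K ≤ N) (h : UnramifiedOver G N) :
    haveI : (N.map (QuotientGroup.mk' K)).Normal :=
      Subgroup.Normal.map inferInstance _ (QuotientGroup.mk'_surjective K)
    UnramifiedOver (G ⧸ K) (N.map (QuotientGroup.mk' K)) := by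
  intro χq hχq
  obtain ⟨Y, hYs, rfl⟩ := hχq
  haveI := hYs
  set mk := QuotientGroup.mk' K with hmk
  haveI : Simple (resFD mk Y) :=
    simple_res_of_surjective mk (QuotientGroup.mk'_surjective K) Y
  rcases h (resFD mk Y).character ⟨resFD mk Y, inferInstance, rfl⟩ with hMF | hconst
  · left
    intro μq hμq
    obtain ⟨σq, hσqs, rfl⟩ := hμq
    haveI := hσqs
    set π : ↥N →* ↥(N.map mk) := mk.subgroupMap N with hπ
    have hπs : Function.Surjective π := mk.subgroupMap_surjective N
    haveI : Simple (resFD π σq) := simple_res_of_surjective π hπs σq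
    have hval := hMF (resFD π σq).character ⟨resFD π σq, inferInstance, rfl⟩
    have heq : charInner (↥N) (fun n : ↥N => (resFD mk Y).character ↑n)
        ((resFD π σq).character)
        = charInner (↥(N.map mk)) (fun m : ↥(N.map mk) => Y.character ↑m)
          σq.character := by
      have h1 : (fun n : ↥N => (resFD mk Y).character ↑n)
          = fun n : ↥N => (fun m : ↥(N.map mk) => Y.character ↑m) (π n) := by
        funext n
        rfl
      have h2 : ((resFD π σq).character)
          = fun n : ↥N => σq.character (π n) := rfl
      rw [h1, h2]
      exact charInner_comp_surjective π hπs (fun m : ↥(N.map mk) => Y.character ↑m) σq.character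
    rw [heq] at hval
    exact hval
  · right
    intro m
    obtain ⟨n, hn, hmn⟩ := Subgroup.mem_map.mp m.2
    have h1 : Y.character ↑m = (resFD mk Y).character n := by
      show Y.character ↑m = Y.character (mk n)
      rw [hmn]
    have h2 : (resFD mk Y).character ((⟨n, hn⟩ : ↥N) : G) = (resFD mk Y).character (1 : G) :=
      hconst ⟨n, hn⟩
    have h3 : (resFD mk Y).character (1 : G) = Y.character 1 := by
      show Y.character (mk 1) = Y.character 1
      rw [map_one]
    exact h1.trans (h2.trans h3)

/-! ### a nontrivial normal subgroup of a nilpotent group meets the center -/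

theorem inf_center_ne_bot {G : Type} [Group G] [Group.IsNilpotent G] (N : Subgroup G)
    [hN : N.Normal] (hbot : N ≠ ⊥) : N ⊓ Subgroup.center G ≠ ⊥ := by
  obtain ⟨n, hn⟩ := Group.IsNilpotent.nilpotent G
  have hP : ∃ k, N ⊓ Subgroup.upperCentralSeries G k ≠ ⊥ := by
    refine ⟨n, ?_⟩
    rw [hn, inf_top_eq]
    exact hbot
  classical
  set k₀ := Nat.find hP with hk₀
  have hk₀spec : N ⊓ Subgroup.upperCentralSeries G k₀ ≠ ⊥ := Nat.find_spec hP
  have hk₀pos : k₀ ≠ 0 := by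
    intro h0
    apply hk₀spec
    rw [h0, Subgroup.upperCentralSeries_zero, inf_bot_eq]
  obtain ⟨m, hm⟩ := Nat.exists_eq_succ_of_ne_zero hk₀pos
  have hmin : N ⊓ Subgroup.upperCentralSeries G m = ⊥ := by
    by_contra hne
    have hle : k₀ ≤ m := Nat.find_le hne
    omega
  obtain ⟨⟨x, hx⟩, hx1⟩ := Subgroup.ne_bot_iff_exists_ne_one.mp hk₀spec
  intro hcontra
  have hxN : x ∈ N := hx.1
  have hxZ : x ∈ Subgroup.upperCentralSeries G k₀ := hx.2
  have hxc : x ∈ Subgroup.center G := by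
    rw [Subgroup.mem_center_iff]
    intro y
    have hcomm : x * y * x⁻¹ * y⁻¹ ∈ Subgroup.upperCentralSeries G m := by
      rw [hm] at hxZ
      exact (Subgroup.mem_upperCentralSeries_succ_iff).mp hxZ y
    have hcommN : x * y * x⁻¹ * y⁻¹ ∈ N := by
      have h5 : y * x⁻¹ * y⁻¹ ∈ N := hN.conj_mem _ (N.inv_mem hxN) y
      have h6 := N.mul_mem hxN h5
      convert h6 using 1
      group
    have hmem : x * y * x⁻¹ * y⁻¹ ∈ N ⊓ Subgroup.upperCentralSeries G m := ⟨hcommN, hcomm⟩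
    rw [hmin] at hmem
    have h6 : x * y * x⁻¹ * y⁻¹ = 1 := hmem
    have h7 : x * y * x⁻¹ * y⁻¹ * (y * x) = y * x := by rw [h6, one_mul]
    have h8 : x * y * x⁻¹ * y⁻¹ * (y * x) = x * y := by group
    exact h7.symm.trans h8
  have hxmem : x ∈ N ⊓ Subgroup.center G := ⟨hxN, hxc⟩
  rw [hcontra] at hxmem
  apply hx1
  apply Subtype.ext
  exact hxmem

/-! ### the key dichotomy for a central N -/

theorem dichotomy {G : Type} [Group G] [Finite G] (N : Subgroup G) [N.Normal]
    (hNZ : N ≤ Subgroup.center G) (h : UnramifiedOver G N)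
    (X : FDRep ℂ G) (hXs : Simple X) :
    (∀ n ∈ N, ∀ v : X, X.ρ n v = v) ∨ finrank ℂ X = 1 := by
  haveI := hXs
  haveI hnt : Nontrivial X := nontrivial_of_simple X
  obtain ⟨v₀, hv₀⟩ := exists_ne (0 : X)
  have hsc : ∀ n : ↥N, ∃ cc : ℂ, ∀ v : X, X.ρ ↑n v = cc • v := by
    intro n
    apply exists_scalar_of_comm (X.ρ (↑n : G))
    intro g v
    have h1 : X.ρ ↑n (X.ρ g v) = X.ρ (↑n * g) v := by rw [map_mul]; rfl
    have h2 : X.ρ g (X.ρ ↑n v) = X.ρ (g * ↑n) v := by rw [map_mul]; rfl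
    have h3 : X.ρ ((↑n : G) * g) v = X.ρ (g * ↑n) v :=
      congrArg (fun z => X.ρ z v) (Subgroup.mem_center_iff.mp (hNZ n.2) g).symm
    exact h1.trans (h3.trans h2.symm)
  set c : ↥N → ℂ := fun n => Classical.choose (hsc n) with hcdef
  have hcs : ∀ (n : ↥N) (v : X), X.ρ ↑n v = c n • v := fun n => Classical.choose_spec (hsc n)
  have hcmul : ∀ n m : ↥N, c (n * m) = c n * c m := by
    intro n m
    have h1 : X.ρ ↑(n * m) v₀ = c (n * m) • v₀ := hcs (n * m) v₀
    have h2 : X.ρ ↑(n * m) v₀ = (c n * c m) • v₀ := by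
      have he : ((n * m : ↥N) : G) = ↑n * ↑m := rfl
      rw [he, map_mul]
      have he2 : (X.ρ ↑n * X.ρ ↑m) v₀ = X.ρ ↑n (X.ρ ↑m v₀) := rfl
      rw [he2, hcs m v₀, map_smul, hcs n v₀, smul_smul, mul_comm]
    exact smul_left_injective ℂ hv₀ (h1.symm.trans h2)
  have hcone : c 1 = 1 := by
    have h1 : X.ρ ↑(1 : ↥N) v₀ = c 1 • v₀ := hcs 1 v₀
    have h2 : X.ρ ↑(1 : ↥N) v₀ = (1 : ℂ) • v₀ := by
      have he : ((1 : ↥N) : G) = 1 := rfl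
      rw [he, map_one, one_smul]
      rfl
    exact smul_left_injective ℂ hv₀ (h1.symm.trans h2)
  have hmap_one : c (1 : ↥N) • (LinearMap.id : ℂ →ₗ[ℂ] ℂ) = 1 := by
    rw [hcone, one_smul]
    rfl
  have hmap_mul : ∀ n m : ↥N, c (n * m) • (LinearMap.id : ℂ →ₗ[ℂ] ℂ)
      = (c n • (LinearMap.id : ℂ →ₗ[ℂ] ℂ)) * (c m • (LinearMap.id : ℂ →ₗ[ℂ] ℂ)) := by
    intro n m
    apply LinearMap.ext; intro z
    have hl : (c (n * m) • (LinearMap.id : ℂ →ₗ[ℂ] ℂ)) z = c (n * m) * z := rfl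
    have hr : ((c n • (LinearMap.id : ℂ →ₗ[ℂ] ℂ)) * (c m • (LinearMap.id : ℂ →ₗ[ℂ] ℂ))) z
        = c n * (c m * z) := rfl
    rw [hl, hr, hcmul n m]
    ring
  set σρ : Representation ℂ ↥N ℂ :=
    MonoidHom.mk (OneHom.mk (fun n : ↥N => c n • (LinearMap.id : ℂ →ₗ[ℂ] ℂ)) hmap_one)
      hmap_mul with hσρ
  set σ : FDRep ℂ ↥N := FDRep.of σρ with hσ
  have hσfr : finrank ℂ σ = 1 := Module.finrank_self ℂ
  have hσchar : ∀ n : ↥N, σ.character n = c n := by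
    intro n
    show LinearMap.trace ℂ ℂ (c n • (LinearMap.id : ℂ →ₗ[ℂ] ℂ)) = c n
    have hid : (LinearMap.id : ℂ →ₗ[ℂ] ℂ) = 1 := rfl
    rw [hid, map_smul, LinearMap.trace_one, Module.finrank_self, smul_eq_mul]
    norm_num
  have hσs : Simple σ := simple_of_finrank_one σ hσfr
  have hχn : ∀ n : ↥N, X.character ↑n = (finrank ℂ X : ℂ) * c n := by
    intro n
    show LinearMap.trace ℂ X.V (X.ρ ↑n) = _
    have hfn : X.ρ (↑n : G) = c n • (1 : X.V →ₗ[ℂ] X.V) := by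
      apply LinearMap.ext; intro v
      rw [hcs n v]
      rfl
    rw [hfn, map_smul, LinearMap.trace_one, smul_eq_mul, mul_comm]
  have hdpos : (0 : ℕ) < finrank ℂ X := Module.finrank_pos
  rcases h X.character ⟨X, hXs, rfl⟩ with hMF | hconst
  · right
    have hval := hMF σ.character ⟨σ, hσs, rfl⟩
    letI := Fintype.ofFinite ↥N
    have hcompute : charInner ↥N (fun n : ↥N => X.character ↑n) σ.character
        = (finrank ℂ X : ℂ) := by
      rw [charInner_eq]
      have hterm : ∀ n : ↥N, X.character ↑n * (starRingEnd ℂ) (σ.character n)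
          = (finrank ℂ X : ℂ) := by
        intro n
        have hnorm := char_norm_one σ hσfr n
        rw [hσchar n] at hnorm
        rw [hχn n, hσchar n, mul_assoc, hnorm, mul_one]
      rw [Finset.sum_congr rfl (fun n _ => hterm n), Finset.sum_const, Finset.card_univ,
        nsmul_eq_mul, ← mul_assoc, inv_mul_cancel₀ (card_cast_ne_zero ↥N), one_mul]
    rw [hcompute] at hval
    rcases hval with h0 | h1
    · exfalso
      have : finrank ℂ X = 0 := by exact_mod_cast h0
      omega
    · exact_mod_cast h1
  · left
    intro n hn v
    have h1 := hconst ⟨n, hn⟩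
    have h2 : (finrank ℂ X : ℂ) * c ⟨n, hn⟩ = (finrank ℂ X : ℂ) := by
      rw [← hχn ⟨n, hn⟩]
      show X.character ((⟨n, hn⟩ : ↥N) : G) = _
      rw [h1, FDRep.char_one]
    have hd0 : ((finrank ℂ X : ℂ)) ≠ 0 := by exact_mod_cast hdpos.ne'
    have hc1 : c ⟨n, hn⟩ = 1 := by
      have := mul_left_cancel₀ hd0 (h2.trans (mul_one _).symm)
      exact this
    have h3 : X.ρ n v = X.ρ ((⟨n, hn⟩ : ↥N) : G) v := rfl
    rw [h3, hcs ⟨n, hn⟩ v, hc1, one_smul]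

/-! ### commutators land in N -/

theorem commutator_mem_of_unramified :
    ∀ (n : ℕ) (G : Type) [Group G] [Finite G] [Group.IsNilpotent G]
      (N : Subgroup G) [N.Normal], Nat.card G ≤ n → N ≠ ⊥ → UnramifiedOver G N →
      ∀ g h' : G, g * h' * g⁻¹ * h'⁻¹ ∈ N := by
  intro n
  induction n with
  | zero =>
    intro G _ _ _ N _ hcard
    exfalso
    have : 0 < Nat.card G := Nat.card_pos
    omega
  | succ n ih =>
    intro G _ _ _ N _ hcard hbot h g h'
    by_cases hK : ∃ K : Subgroup G, K.Normal ∧ ⊥ < K ∧ K < N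
    · obtain ⟨K, hKn, hKb, hKN⟩ := hK
      haveI := hKn
      set mk := QuotientGroup.mk' K with hmk
      haveI hN' : (N.map mk).Normal :=
        Subgroup.Normal.map inferInstance _ (QuotientGroup.mk'_surjective K)
      have hcard' : Nat.card (G ⧸ K) ≤ n := by
        have h1 := Subgroup.card_eq_card_quotient_mul_card_subgroup K
        have h2 : 1 < Nat.card ↥K := (Subgroup.one_lt_card_iff_ne_bot K).mpr hKb.ne'
        have h3 : 0 < Nat.card (G ⧸ K) := Nat.card_pos
        have h4 : Nat.card (G ⧸ K) * 2 ≤ Nat.card (G ⧸ K) * Nat.card ↥K :=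
          Nat.mul_le_mul_left _ h2
        rw [← h1] at h4
        omega
      have hbot' : N.map mk ≠ ⊥ := by
        obtain ⟨x, hxN, hxK⟩ := SetLike.exists_of_lt hKN
        intro hb
        have hx : mk x ∈ N.map mk := Subgroup.mem_map_of_mem mk hxN
        rw [hb, Subgroup.mem_bot] at hx
        exact hxK ((QuotientGroup.eq_one_iff x).mp hx)
      have hunr' := unramified_quotient N K (le_of_lt hKN) h
      have hres := ih (G ⧸ K) (N.map mk) hcard' hbot' hunr' (mk g) (mk h')
      have hmem : mk (g * h' * g⁻¹ * h'⁻¹) ∈ N.map mk := by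
        have he : mk (g * h' * g⁻¹ * h'⁻¹) = mk g * mk h' * (mk g)⁻¹ * (mk h')⁻¹ := by
          simp [map_mul, map_inv]
        rw [he]
        exact hres
      have hcomap : g * h' * g⁻¹ * h'⁻¹ ∈ Subgroup.comap mk (N.map mk) := hmem
      rw [Subgroup.comap_map_eq] at hcomap
      have hker : mk.ker = K := QuotientGroup.ker_mk' K
      rw [hker, sup_of_le_left (le_of_lt hKN)] at hcomap
      exact hcomap
    · push_neg at hK
      have hNZ : N ≤ Subgroup.center G := by
        have hinf_ne : N ⊓ Subgroup.center G ≠ ⊥ := inf_center_ne_bot N hbot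
        by_cases heq : N ⊓ Subgroup.center G = N
        · intro x hx
          have hx2 : x ∈ N ⊓ Subgroup.center G := heq.symm ▸ hx
          exact hx2.2
        · exfalso
          have h1 : ⊥ < N ⊓ Subgroup.center G := bot_lt_iff_ne_bot.mpr hinf_ne
          have h2 : N ⊓ Subgroup.center G < N := lt_of_le_of_ne inf_le_left heq
          exact hK _ inferInstance h1 h2
      obtain ⟨⟨n₁g, hn₁N⟩, hx1⟩ := Subgroup.ne_bot_iff_exists_ne_one.mp hbot
      have hn₁1 : n₁g ≠ 1 := fun hh => hx1 (Subtype.ext hh)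
      have hψex : ∃ Y : FDRep ℂ G, Simple Y ∧ ∃ v : Y, Y.ρ n₁g v ≠ v := by
        by_contra hall
        push_neg at hall
        exact hn₁1 (eq_one_of_forall_simple n₁g (fun Y hYs v => hall Y hYs v))
      obtain ⟨ψ, hψs, v₁, hv₁⟩ := hψex
      haveI := hψs
      have hψfr : finrank ℂ ψ = 1 := by
        rcases dichotomy N hNZ h ψ hψs with hl | hr
        · exact absurd (hl n₁g hn₁N v₁) hv₁
        · exact hr
      have hcψ_mul : ∀ a b : G, ψ.character (a * b) = ψ.character a * ψ.character b :=
        char_mul_of_finrank_one ψ hψfr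
      have hcψ_one : ψ.character 1 = 1 := char_one_of_finrank_one ψ hψfr
      have hscψ : ∀ a (v : ψ), ψ.ρ a v = ψ.character a • v :=
        fdRep_ρ_scalar_of_finrank_one ψ hψfr
      have hcn₁ : ψ.character n₁g ≠ 1 := by
        intro h1
        apply hv₁
        rw [hscψ n₁g v₁, h1, one_smul]
      have hcψ_ne : ∀ a : G, ψ.character a ≠ 0 := by
        intro a h0
        have hnorm := char_norm_one ψ hψfr a
        rw [h0, zero_mul] at hnorm
        norm_num at hnorm
      have hqone : QuotientGroup.mk' N (g * h' * g⁻¹ * h'⁻¹) = 1 := by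
        apply eq_one_of_forall_simple
        intro Ybar hYbar v
        haveI := hYbar
        set X : FDRep ℂ G := resFD (QuotientGroup.mk' N) Ybar with hX
        haveI hXs : Simple X :=
          simple_res_of_surjective _ (QuotientGroup.mk'_surjective N) Ybar
        have hT_one : ψ.character (1 : G) • X.ρ (1 : G) = 1 := by
          rw [hcψ_one, map_one, one_smul]
        have hT_mul : ∀ a b : G, ψ.character (a * b) • X.ρ (a * b)
            = (ψ.character a • X.ρ a) * (ψ.character b • X.ρ b) := by
          intro a b
          rw [hcψ_mul a b, map_mul]
          exact (smul_mul_smul _ _ _ _).symm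
        set Tρ : Representation ℂ G X.V :=
          MonoidHom.mk (OneHom.mk (fun a => ψ.character a • X.ρ a) hT_one) hT_mul with hTρ
        set TF : FDRep ℂ G := FDRep.of Tρ with hTF
        have hTcomm : ∀ a b : G, ∀ w : CoeSort.coe X, Tρ a (Tρ b w) = Tρ b (Tρ a w) := by
          intro a b
          letI := Fintype.ofFinite G
          have hmin : ∀ m, MinRep Tρ m →
              m ≤ LinearMap.ker (Tρ a ∘ₗ Tρ b - Tρ b ∘ₗ Tρ a) := by
            intro m hm
            have hsimple : Simple (subFD TF m hm.1) := simple_subFD_of_minRep TF m hm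
            have hfr1 : finrank ℂ ↥m = 1 := by
              rcases dichotomy N hNZ h (subFD TF m hm.1) hsimple with hl | hr
              · exfalso
                obtain ⟨w, hwm, hw0⟩ := Submodule.exists_mem_ne_zero_of_ne_bot hm.2.1
                have h1 := hl n₁g hn₁N ⟨w, hwm⟩
                have h2 : Tρ n₁g w = w := congrArg Subtype.val h1
                have h3 : X.ρ n₁g w = w := by
                  show Ybar.ρ (QuotientGroup.mk' N n₁g) w = w
                  have hone : QuotientGroup.mk' N n₁g = 1 :=
                    (QuotientGroup.eq_one_iff n₁g).mpr hn₁N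
                  rw [hone, map_one]
                  rfl
                have h4 : Tρ n₁g w = ψ.character n₁g • w := by
                  show ψ.character n₁g • X.ρ n₁g w = ψ.character n₁g • w
                  rw [h3]
                rw [h4] at h2
                have h5 : (ψ.character n₁g - 1) • w = 0 := by
                  rw [sub_smul, one_smul, h2, sub_self]
                rcases smul_eq_zero.mp h5 with h6 | h6
                · exact hcn₁ (sub_eq_zero.mp h6)
                · exact hw0 h6
              · exact hr
            intro w hw
            rw [LinearMap.mem_ker, LinearMap.sub_apply, LinearMap.comp_apply,
              LinearMap.comp_apply]
            have hva := scalar_of_finrank_one hfr1 (subRepn Tρ m hm.1 a) ⟨w, hw⟩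
            have hvb := scalar_of_finrank_one hfr1 (subRepn Tρ m hm.1 b) ⟨w, hw⟩
            have hva' : Tρ a w = (LinearMap.trace ℂ ↥m (subRepn Tρ m hm.1 a)) • w :=
              congrArg Subtype.val hva
            have hvb' : Tρ b w = (LinearMap.trace ℂ ↥m (subRepn Tρ m hm.1 b)) • w :=
              congrArg Subtype.val hvb
            have h5 : Tρ a (Tρ b w)
                = (LinearMap.trace ℂ ↥m (subRepn Tρ m hm.1 b))
                  • ((LinearMap.trace ℂ ↥m (subRepn Tρ m hm.1 a)) • w) := by
              rw [hvb', map_smul, hva']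
            have h6 : Tρ b (Tρ a w)
                = (LinearMap.trace ℂ ↥m (subRepn Tρ m hm.1 a))
                  • ((LinearMap.trace ℂ ↥m (subRepn Tρ m hm.1 b)) • w) := by
              rw [hva', map_smul, hvb']
            rw [h5, h6, smul_comm, sub_self]
          have hker := le_top_of_minRep_le Tρ
            (LinearMap.ker (Tρ a ∘ₗ Tρ b - Tρ b ∘ₗ Tρ a)) hmin
          intro w
          have hw := hker w
          rw [LinearMap.mem_ker, LinearMap.sub_apply, LinearMap.comp_apply,
            LinearMap.comp_apply, sub_eq_zero] at hw
          exact hw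
        have hXcomm : ∀ a b : G, ∀ w : CoeSort.coe X, X.ρ a (X.ρ b w) = X.ρ b (X.ρ a w) := by
          intro a b w
          have h1 := hTcomm a b w
          have h2 : Tρ a (Tρ b w) = (ψ.character a * ψ.character b) • (X.ρ a (X.ρ b w)) := by
            show ψ.character a • X.ρ a (ψ.character b • X.ρ b w) = _
            rw [map_smul, smul_smul]
          have h3 : Tρ b (Tρ a w) = (ψ.character a * ψ.character b) • (X.ρ b (X.ρ a w)) := by
            show ψ.character b • X.ρ b (ψ.character a • X.ρ a w) = _
            rw [map_smul, smul_smul, mul_comm]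
          rw [h2, h3] at h1
          have hne : (ψ.character a * ψ.character b) ≠ 0 :=
            mul_ne_zero (hcψ_ne a) (hcψ_ne b)
          exact smul_right_injective _ hne h1
        show Ybar.ρ (QuotientGroup.mk' N (g * h' * g⁻¹ * h'⁻¹)) v = v
        have hfact : g * h' * g⁻¹ * h'⁻¹ = (g * h') * (h' * g)⁻¹ := by group
        have hXq : X.ρ (g * h' * g⁻¹ * h'⁻¹) v = v := by
          rw [hfact, map_mul]
          have hstep : (X.ρ (g * h') * X.ρ ((h' * g)⁻¹)) v
              = X.ρ (g * h') (X.ρ ((h' * g)⁻¹) v) := rfl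
          rw [hstep]
          have hcom : X.ρ (g * h') (X.ρ ((h' * g)⁻¹) v) = X.ρ (h' * g) (X.ρ ((h' * g)⁻¹) v) := by
            have hmm : ∀ w : CoeSort.coe X, X.ρ (g * h') w = X.ρ (h' * g) w := by
              intro w
              have e1 : X.ρ (g * h') w = X.ρ g (X.ρ h' w) := by rw [map_mul]; rfl
              have e2 : X.ρ (h' * g) w = X.ρ h' (X.ρ g w) := by rw [map_mul]; rfl
              rw [e1, e2, hXcomm g h' w]
            exact hmm _
          rw [hcom]
          have hclose : X.ρ (h' * g) (X.ρ ((h' * g)⁻¹) v) = X.ρ ((h' * g) * (h' * g)⁻¹) v := by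
            rw [map_mul X.ρ (h' * g) (h' * g)⁻¹]
            rfl
          rw [hclose, mul_inv_cancel, map_one]
          rfl
        exact hXq
      exact (QuotientGroup.eq_one_iff (g * h' * g⁻¹ * h'⁻¹)).mp hqone

end

end StmtAux
/-- If a finite nilpotent group G is unramified over a nontrivial abelian normal
subgroup N, then G is unramified over every abelian normal subgroup M ⊇ N. -/
theorem stmt_19 {G : Type} [Group G] [Finite G] [Group.IsNilpotent G]
    (N : Subgroup G) [N.Normal] (hab : ∀ a b : ↥N, a * b = b * a)
    (hbot : N ≠ ⊥) (h : UnramifiedOver G N) (M : Subgroup G) [M.Normal]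
    (habM : ∀ a b : ↥M, a * b = b * a) (hNM : N ≤ M) :
    UnramifiedOver G M := by
  classical
  open StmtAux Module CategoryTheory in
  intro χ hχ
  obtain ⟨X, hXs, rfl⟩ := hχ
  haveI := hXs
  left
  intro μ hμ
  obtain ⟨σ, hσs, rfl⟩ := hμ
  haveI := hσs
  have hσfr : Module.finrank ℂ σ = 1 := by
    apply StmtAux.finrank_eq_one_of_commuting σ
    intro a b v
    have e1 : σ.ρ a (σ.ρ b v) = σ.ρ (a * b) v := by rw [map_mul]; rfl
    have e2 : σ.ρ b (σ.ρ a v) = σ.ρ (b * a) v := by rw [map_mul]; rfl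
    rw [e1, e2, habM a b]
  set XM : FDRep ℂ ↥M := StmtAux.resFD M.subtype X with hXM
  have hfunM : (fun m : ↥M => X.character ↑m) = XM.character := rfl
  have hinnM : charInner ↥M XM.character σ.character
      = (Module.finrank ℂ
          (Representation.invariants (Representation.linHom σ.ρ XM.ρ)) : ℂ) :=
    StmtAux.charInner_char_eq_finrank_invariants XM σ hσfr
  rcases h X.character ⟨X, hXs, rfl⟩ with hMF | hconst
  · -- case A : multiplicity free over N
    set ι : ↥N →* ↥M := Subgroup.inclusion hNM with hι
    set σN := StmtAux.resFD ι σ with hσN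
    have hσNfr : Module.finrank ℂ σN = 1 := hσfr
    have hσNs : CategoryTheory.Simple σN := StmtAux.simple_of_finrank_one σN hσNfr
    have hfunN : (fun nn : ↥N => X.character ↑nn) = (StmtAux.resFD ι XM).character := by
      funext nn
      show X.character ↑nn = X.character (M.subtype (ι nn))
      rfl
    have hval := hMF σN.character ⟨σN, hσNs, rfl⟩
    rw [hfunN] at hval
    have hinnN : charInner ↥N (StmtAux.resFD ι XM).character σN.character
        = (Module.finrank ℂ (Representation.invariants
            (Representation.linHom σN.ρ (StmtAux.resFD ι XM).ρ)) : ℂ) :=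
      StmtAux.charInner_char_eq_finrank_invariants (StmtAux.resFD ι XM) σN hσNfr
    rw [hinnN] at hval
    have hdN : Module.finrank ℂ (Representation.invariants
        (Representation.linHom σN.ρ (StmtAux.resFD ι XM).ρ)) ≤ 1 := by
      rcases hval with h0 | h1
      · have : Module.finrank ℂ (Representation.invariants
            (Representation.linHom σN.ρ (StmtAux.resFD ι XM).ρ)) = 0 := by exact_mod_cast h0
        omega
      · have : Module.finrank ℂ (Representation.invariants
            (Representation.linHom σN.ρ (StmtAux.resFD ι XM).ρ)) = 1 := by exact_mod_cast h1
        omega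
    have hle := StmtAux.finrank_inv_res_le ι σ XM
    have hdM : Module.finrank ℂ
        (Representation.invariants (Representation.linHom σ.ρ XM.ρ)) ≤ 1 :=
      le_trans hle hdN
    rw [hfunM, hinnM]
    rcases Nat.le_one_iff_eq_zero_or_eq_one.mp hdM with h0 | h1
    · left; rw [h0]; norm_num
    · right; rw [h1]; norm_num
  · -- case B : character constant on N
    have hconstN : ∀ nn : ↥N, (StmtAux.resFD N.subtype X).character nn
        = (StmtAux.resFD N.subtype X).character 1 := by
      intro nn
      show X.character ↑nn = X.character (N.subtype 1)
      exact hconst nn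
    have hNker : ∀ nn : ↥N, ∀ v : CoeSort.coe X, X.ρ ↑nn v = v := by
      intro nn v
      exact StmtAux.ρ_trivial_of_char_const (StmtAux.resFD N.subtype X) hconstN nn v
    have hcomm := StmtAux.commutator_mem_of_unramified (Nat.card G) G N (le_refl _) hbot h
    have hXcomm : ∀ a b : G, ∀ v : CoeSort.coe X, X.ρ a (X.ρ b v) = X.ρ b (X.ρ a v) := by
      intro a b v
      have hq := hcomm a b
      have h1 : X.ρ ((⟨a * b * a⁻¹ * b⁻¹, hq⟩ : ↥N) : G) (X.ρ (b * a) v) = X.ρ (b * a) v :=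
        hNker ⟨_, hq⟩ _
      have h2 : X.ρ (a * b * a⁻¹ * b⁻¹) (X.ρ (b * a) v)
          = X.ρ ((a * b * a⁻¹ * b⁻¹) * (b * a)) v := by
        rw [map_mul X.ρ (a * b * a⁻¹ * b⁻¹) (b * a)]
        rfl
      have h3 : (a * b * a⁻¹ * b⁻¹) * (b * a) = a * b := by group
      have h4 : X.ρ (a * b) v = X.ρ (b * a) v := by
        have h5 : X.ρ (a * b) v = X.ρ ((a * b * a⁻¹ * b⁻¹) * (b * a)) v := by rw [h3]
        rw [h5, ← h2]
        exact h1
      have e1 : X.ρ a (X.ρ b v) = X.ρ (a * b) v := by rw [map_mul]; rfl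
      have e2 : X.ρ b (X.ρ a v) = X.ρ (b * a) v := by rw [map_mul]; rfl
      rw [e1, e2, h4]
    have hXfr : Module.finrank ℂ X = 1 := StmtAux.finrank_eq_one_of_commuting X hXcomm
    have hle2 : Module.finrank ℂ
        (Representation.invariants (Representation.linHom σ.ρ XM.ρ)) ≤ 1 := by
      have hfl := Submodule.finrank_le
        (Representation.invariants (Representation.linHom σ.ρ XM.ρ))
      have hamb : Module.finrank ℂ (σ.V →ₗ[ℂ] XM.V) = 1 := by
        rw [Module.finrank_linearMap, hσfr, one_mul]
        exact hXfr
      rw [hamb] at hfl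
      exact hfl
    rw [hfunM, hinnM]
    rcases Nat.le_one_iff_eq_zero_or_eq_one.mp hle2 with h0 | h1
    · left; rw [h0]; norm_num
    · right; rw [h1]; norm_num
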